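/- Let q > 0 and let π(dx) = (e^{-a₊x/2}/x^{1-q})(𝓘(x/(2b₊), p₊) + max(p₊,0)) dx restricted to (0,1). Assuming 𝓘(x,p) = 1/(2√(πx)) + (1-2p)/4 + O(√x) as x→0⁺, the integral ∫_0^1 x^{q} · (e^{-a₊x/2}/x)(𝓘(x/(2b₊),p₊) + max(p₊,0)) dx is finite if and only if q > 1/2. Consequently the Blumenthal–Getoor index of the GIG₊ (and BGIG) Lévy process equals 1/2. -/

import Mathlib

open MeasureTheory Real Filter Set Asymptotics
open scoped Topology

/-- Bessel function of the first kind (Schläfli integral representation, valid for `x > 0`). -/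
noncomputable def besselJ (ν x : ℝ) : ℝ :=
  (∫ τ in Set.Ioc (0:ℝ) Real.pi, Real.cos (ν * τ - x * Real.sin τ)) / Real.pi
    - Real.sin (ν * Real.pi) / Real.pi
        * ∫ t in Set.Ioi (0:ℝ), Real.exp (-x * Real.sinh t - ν * t)

/-- Bessel function of the second kind (integral representation, valid for `x > 0`). -/
noncomputable def besselY (ν x : ℝ) : ℝ :=
  (∫ τ in Set.Ioc (0:ℝ) Real.pi, Real.sin (x * Real.sin τ - ν * τ)) / Real.pi
    - (∫ t in Set.Ioi (0:ℝ),
        (Real.exp (ν * t) + Real.cos (ν * Real.pi) * Real.exp (-ν * t))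
          * Real.exp (-x * Real.sinh t)) / Real.pi

/-- Squared modulus of the Hankel function of the first kind:
`|H_ν(x)|² = J_ν(x)² + Y_ν(x)²`. -/
noncomputable def hankelNormSq (ν x : ℝ) : ℝ := besselJ ν x ^ 2 + besselY ν x ^ 2

/-- The Jaeger integral `𝓘(x,p) = (2/π²) ∫_0^∞ e^{-x y²} / (y |H_p(y)|²) dy`. -/
noncomputable def jaeger (x p : ℝ) : ℝ :=
  2 / Real.pi ^ 2 * ∫ y in Set.Ioi (0:ℝ), Real.exp (-x * y ^ 2) / (y * hankelNormSq p y)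

set_option maxHeartbeats 1000000

lemma measurable_besselJ (ν : ℝ) : Measurable (besselJ ν) := by
  have h1 : StronglyMeasurable fun x : ℝ =>
      ∫ τ in Set.Ioc (0:ℝ) Real.pi, Real.cos (ν * τ - x * Real.sin τ) :=
    MeasureTheory.StronglyMeasurable.integral_prod_right
      (f := fun x τ => Real.cos (ν * τ - x * Real.sin τ))
      (Continuous.stronglyMeasurable (by fun_prop))
  have h2 : StronglyMeasurable fun x : ℝ =>
      ∫ t in Set.Ioi (0:ℝ), Real.exp (-x * Real.sinh t - ν * t) :=
    MeasureTheory.StronglyMeasurable.integral_prod_right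
      (f := fun x t => Real.exp (-x * Real.sinh t - ν * t))
      (Continuous.stronglyMeasurable (by fun_prop))
  exact (h1.measurable.div_const _).sub (measurable_const.mul h2.measurable)

lemma measurable_besselY (ν : ℝ) : Measurable (besselY ν) := by
  have h1 : StronglyMeasurable fun x : ℝ =>
      ∫ τ in Set.Ioc (0:ℝ) Real.pi, Real.sin (x * Real.sin τ - ν * τ) :=
    MeasureTheory.StronglyMeasurable.integral_prod_right
      (f := fun x τ => Real.sin (x * Real.sin τ - ν * τ))
      (Continuous.stronglyMeasurable (by fun_prop))
  have h2 : StronglyMeasurable fun x : ℝ =>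
      ∫ t in Set.Ioi (0:ℝ),
        (Real.exp (ν * t) + Real.cos (ν * Real.pi) * Real.exp (-ν * t))
          * Real.exp (-x * Real.sinh t) :=
    MeasureTheory.StronglyMeasurable.integral_prod_right
      (f := fun x t => (Real.exp (ν * t) + Real.cos (ν * Real.pi) * Real.exp (-ν * t))
          * Real.exp (-x * Real.sinh t))
      (Continuous.stronglyMeasurable (by fun_prop))
  exact (h1.measurable.div_const _).sub (h2.measurable.div_const _)

lemma measurable_hankelNormSq (ν : ℝ) : Measurable (hankelNormSq ν) :=
  ((measurable_besselJ ν).pow_const 2).add ((measurable_besselY ν).pow_const 2)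

lemma measurable_jaeger (p : ℝ) : Measurable fun x => jaeger x p := by
  have h1 : StronglyMeasurable fun x : ℝ =>
      ∫ y in Set.Ioi (0:ℝ), Real.exp (-x * y ^ 2) / (y * hankelNormSq p y) :=
    MeasureTheory.StronglyMeasurable.integral_prod_right
      (f := fun x y => Real.exp (-x * y ^ 2) / (y * hankelNormSq p y))
      (Measurable.stronglyMeasurable
        ((by fun_prop : Measurable fun q : ℝ × ℝ => Real.exp (-q.1 * q.2 ^ 2)).div
          ((measurable_snd).mul ((measurable_hankelNormSq p).comp measurable_snd))))
  exact measurable_const.mul h1.measurable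

lemma hank_nonneg (p y : ℝ) : 0 ≤ hankelNormSq p y :=
  add_nonneg (sq_nonneg _) (sq_nonneg _)

lemma kern_nonneg (p x : ℝ) {y : ℝ} (hy : y ∈ Set.Ioi (0:ℝ)) :
    0 ≤ Real.exp (-x * y ^ 2) / (y * hankelNormSq p y) :=
  div_nonneg (Real.exp_nonneg _) (mul_nonneg (le_of_lt hy) (hank_nonneg p y))

lemma jaeger_nonneg (x p : ℝ) : 0 ≤ jaeger x p := by
  refine mul_nonneg (by positivity) ?_
  exact setIntegral_nonneg measurableSet_Ioi fun y hy => kern_nonneg p x hy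

lemma kern_mono {x₀ x : ℝ} (hx : x₀ ≤ x) (p : ℝ) {y : ℝ} (hy : y ∈ Set.Ioi (0:ℝ)) :
    Real.exp (-x * y ^ 2) / (y * hankelNormSq p y)
      ≤ Real.exp (-x₀ * y ^ 2) / (y * hankelNormSq p y) := by
  rcases eq_or_lt_of_le (mul_nonneg (le_of_lt hy) (hank_nonneg p y)) with h | h
  · rw [← h, div_zero, div_zero]
  · have : (-x) * y ^ 2 ≤ (-x₀) * y ^ 2 := by nlinarith [sq_nonneg y]
    gcongr


lemma measurable_kern (p x : ℝ) :
    Measurable fun y => Real.exp (-x * y ^ 2) / (y * hankelNormSq p y) := by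
  have mh : Measurable (hankelNormSq p) := measurable_hankelNormSq p
  exact (by fun_prop : Measurable fun y : ℝ => Real.exp (-x * y ^ 2)).div
    (measurable_id.mul mh)

lemma jaeger_mono {p x₀ x : ℝ} (hx : x₀ ≤ x)
    (h : IntegrableOn (fun y => Real.exp (-x₀ * y ^ 2) / (y * hankelNormSq p y))
      (Set.Ioi 0)) :
    IntegrableOn (fun y => Real.exp (-x * y ^ 2) / (y * hankelNormSq p y)) (Set.Ioi 0)
      ∧ jaeger x p ≤ jaeger x₀ p := by
  have hint : IntegrableOn (fun y => Real.exp (-x * y ^ 2) / (y * hankelNormSq p y))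
      (Set.Ioi 0) := by
    refine MeasureTheory.Integrable.mono h ((measurable_kern p x).aestronglyMeasurable) ?_
    refine (ae_restrict_iff' measurableSet_Ioi).2 (Filter.Eventually.of_forall fun y hy => ?_)
    rw [Real.norm_eq_abs, Real.norm_eq_abs, abs_of_nonneg (kern_nonneg p x hy),
      abs_of_nonneg (kern_nonneg p x₀ hy)]
    exact kern_mono hx p hy
  refine ⟨hint, ?_⟩
  unfold jaeger
  refine mul_le_mul_of_nonneg_left ?_ (by positivity)
  exact setIntegral_mono_on hint h measurableSet_Ioi fun y hy => kern_mono hx p hy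

lemma jaeger_pos_ne (p x : ℝ) (h : jaeger x p ≠ 0) :
    IntegrableOn (fun y => Real.exp (-x * y ^ 2) / (y * hankelNormSq p y)) (Set.Ioi 0) := by
  by_contra hc
  exact h (by unfold jaeger; rw [integral_undef hc, mul_zero])

lemma jaeger_bounds (p : ℝ)
    (h0 : (fun x : ℝ => jaeger x p - (1 / (2 * Real.sqrt (Real.pi * x)) + (1 - 2 * p) / 4))
        =O[𝓝[>] (0:ℝ)] fun x : ℝ => Real.sqrt x) :
    ∃ t C : ℝ, 0 < t ∧ t ≤ 1 ∧ 0 < C ∧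
      ∀ u ∈ Set.Ioo (0:ℝ) t,
        (1 / (2 * Real.sqrt Real.pi)) * (Real.sqrt u)⁻¹ ≤ jaeger u p + max p 0 ∧
        jaeger u p + max p 0 ≤ C * (Real.sqrt u)⁻¹ ∧
        0 < jaeger u p := by
  obtain ⟨C₀, hC₀⟩ := Asymptotics.isBigO_iff.1 h0
  set c : ℝ := (1 - 2 * p) / 4 with hc
  set C : ℝ := |C₀| + 1 with hCdef
  have hCpos : 0 < C := by positivity
  have hC : ∀ᶠ x in 𝓝[>] (0:ℝ),
      |jaeger x p - (1 / (2 * Real.sqrt (Real.pi * x)) + c)| ≤ C * Real.sqrt x := by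
    filter_upwards [hC₀] with x hx
    rw [Real.norm_eq_abs, Real.norm_eq_abs, abs_of_nonneg (Real.sqrt_nonneg x)] at hx
    have : C₀ * Real.sqrt x ≤ C * Real.sqrt x := by
      apply mul_le_mul_of_nonneg_right _ (Real.sqrt_nonneg x)
      calc C₀ ≤ |C₀| := le_abs_self _
      _ ≤ C := by simp [hCdef]
    exact le_trans hx this
  obtain ⟨t₀, ht₀, hsub⟩ := mem_nhdsGT_iff_exists_Ioo_subset.1 hC
  set M : ℝ := |c| + C + 1 with hMdef
  have hMpos : 0 < M := by positivity
  set t : ℝ := min t₀ (min 1 (min ((4*C)⁻¹^2) (Real.pi * (2*M)^2)⁻¹)) with ht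
  have htpos : 0 < t := by
    refine lt_min ht₀ (lt_min one_pos (lt_min (by positivity) (by positivity)))
  have ht1 : t ≤ 1 := le_trans (min_le_right _ _) (min_le_left _ _)
  refine ⟨t, 1 / (2 * Real.sqrt Real.pi) + |c| + |p| + 1, htpos, ht1, by positivity, ?_⟩
  intro u hu
  obtain ⟨hu0, hut⟩ := hu
  have hsu : 0 < Real.sqrt u := Real.sqrt_pos.2 hu0
  have habs := hsub ⟨hu0, lt_of_lt_of_le hut (min_le_left _ _)⟩
  rw [Set.mem_setOf_eq] at habs
  rw [abs_le] at habs
  -- C * sqrt u ≤ 1/4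
  have h2 : C * Real.sqrt u ≤ 1/4 := by
    have hu' : u ≤ (4*C)⁻¹^2 :=
      le_of_lt (lt_of_lt_of_le hut (le_trans (min_le_right _ _)
        (le_trans (min_le_right _ _) (min_le_left _ _))))
    have : Real.sqrt u ≤ (4*C)⁻¹ := by
      calc Real.sqrt u ≤ Real.sqrt ((4*C)⁻¹^2) := Real.sqrt_le_sqrt hu'
      _ = (4*C)⁻¹ := Real.sqrt_sq (by positivity)
    calc C * Real.sqrt u ≤ C * (4*C)⁻¹ := by
          exact mul_le_mul_of_nonneg_left this hCpos.le
    _ = 1/4 := by field_simp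
  -- M ≤ 1/(2 sqrt(pi u))
  have hspu : 0 < Real.sqrt (Real.pi * u) := Real.sqrt_pos.2 (by positivity)
  have h3 : M ≤ 1 / (2 * Real.sqrt (Real.pi * u)) := by
    have hu' : u ≤ (Real.pi * (2*M)^2)⁻¹ :=
      le_of_lt (lt_of_lt_of_le hut (le_trans (min_le_right _ _)
        (le_trans (min_le_right _ _) (min_le_right _ _))))
    have h4 : Real.sqrt (Real.pi * u) ≤ (2*M)⁻¹ := by
      calc Real.sqrt (Real.pi * u) ≤ Real.sqrt (Real.pi * (Real.pi * (2*M)^2)⁻¹) :=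
            Real.sqrt_le_sqrt (by exact mul_le_mul_of_nonneg_left hu' Real.pi_pos.le)
      _ = Real.sqrt (((2*M)^2)⁻¹) := by
            congr 1
            rw [mul_inv]
            rw [← mul_assoc, mul_inv_cancel₀ (ne_of_gt Real.pi_pos), one_mul]
      _ = (2*M)⁻¹ := by
            rw [Real.sqrt_inv, Real.sqrt_sq (by positivity)]
    have h5 : 2 * Real.sqrt (Real.pi * u) ≤ M⁻¹ := by
      calc 2 * Real.sqrt (Real.pi * u) ≤ 2 * (2*M)⁻¹ := by linarith
      _ = M⁻¹ := by field_simp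
    calc M = 1 / M⁻¹ := by rw [one_div, inv_inv]
    _ ≤ 1 / (2 * Real.sqrt (Real.pi * u)) := one_div_le_one_div_of_le (by positivity) h5
  -- rewrite main term
  have heq : 1 / (2 * Real.sqrt (Real.pi * u))
      = (1 / (2 * Real.sqrt Real.pi)) * (Real.sqrt u)⁻¹ := by
    rw [Real.sqrt_mul Real.pi_pos.le]
    have hπ : Real.sqrt Real.pi ≠ 0 := ne_of_gt (Real.sqrt_pos.2 Real.pi_pos)
    field_simp
  have hc' : 1/4 ≤ c + max p 0 := by
    rcases le_total p 0 with hp | hp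
    · rw [max_eq_right hp]; rw [hc]; linarith
    · rw [max_eq_left hp]; rw [hc]; linarith
  have hmaxabs : max p 0 ≤ |p| := max_le (le_abs_self p) (abs_nonneg p)
  have hinv1 : 1 ≤ (Real.sqrt u)⁻¹ := by
    have h1 : Real.sqrt u ≤ 1 := Real.sqrt_le_one.2 (le_trans hut.le ht1)
    have h2' : Real.sqrt u * (Real.sqrt u)⁻¹ = 1 := mul_inv_cancel₀ (ne_of_gt hsu)
    nlinarith [inv_nonneg.2 hsu.le]
  constructor
  · rw [← heq]; linarith [habs.1]
  constructor
  · rw [heq] at habs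
    have hC'nonneg : (0:ℝ) ≤ |c| + |p| + 1 := by positivity
    have : (|c| + |p| + 1) * 1 ≤ (|c| + |p| + 1) * (Real.sqrt u)⁻¹ :=
      mul_le_mul_of_nonneg_left hinv1 hC'nonneg
    have hcle : c ≤ |c| := le_abs_self c
    nlinarith [habs.2]
  · have hcge : -|c| ≤ c := neg_abs_le c
    have := habs.1
    rw [hMdef] at h3
    linarith

/-- Integrability of `x^q` against the GIG Lévy measure near the origin holds iff
`q > 1/2`; consequently the Blumenthal–Getoor index of the GIG (and BGIG) Lévy
process equals `1/2`. -/
theorem gig_blumenthal_getoor (a b p : ℝ) (ha : 0 < a) (hb : 0 < b)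
    (h0 : (fun x : ℝ => jaeger x p - (1 / (2 * Real.sqrt (Real.pi * x)) + (1 - 2 * p) / 4))
        =O[𝓝[>] (0:ℝ)] fun x : ℝ => Real.sqrt x) :
    (∀ q : ℝ, 0 < q →
      (MeasureTheory.IntegrableOn
          (fun x : ℝ => x ^ q * (Real.exp (-a * x / 2) / x
            * (jaeger (x / (2 * b)) p + max p 0))) (Set.Ioo 0 1)
        ↔ 1 / 2 < q)) ∧
    sInf {q : ℝ | 0 < q ∧ MeasureTheory.IntegrableOn
        (fun x : ℝ => x ^ q * (Real.exp (-a * x / 2) / x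
          * (jaeger (x / (2 * b)) p + max p 0))) (Set.Ioo 0 1)} = 1 / 2 := by
  obtain ⟨t, C, htpos, ht1, hCpos, hbd⟩ := jaeger_bounds p h0
  set u₀ : ℝ := t / 2 with hu₀def
  have hu₀mem : u₀ ∈ Set.Ioo (0:ℝ) t :=
    ⟨by rw [hu₀def]; positivity, by rw [hu₀def]; linarith⟩
  have hu₀pos : 0 < u₀ := hu₀mem.1
  have hint₀ : IntegrableOn
      (fun y => Real.exp (-u₀ * y ^ 2) / (y * hankelNormSq p y)) (Set.Ioi 0) :=
    jaeger_pos_ne p u₀ (ne_of_gt (hbd u₀ hu₀mem).2.2)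
  set δ : ℝ := min (2 * b * u₀) 1 with hδdef
  have hδpos : 0 < δ := lt_min (mul_pos (by positivity) hu₀pos) one_pos
  have hδ1 : δ ≤ 1 := min_le_right _ _
  have mj : Measurable fun x : ℝ => jaeger (x / (2 * b)) p :=
    (measurable_jaeger p).comp (measurable_id.div_const _)
  have mf : ∀ q : ℝ, Measurable (fun x : ℝ => x ^ q * (Real.exp (-a * x / 2) / x
      * (jaeger (x / (2 * b)) p + max p 0))) := by
    intro q
    fun_prop
  -- membership of scaled argument
  have hmem : ∀ x ∈ Set.Ioo (0:ℝ) δ, x / (2 * b) ∈ Set.Ioo (0:ℝ) t := by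
    intro x hx
    constructor
    · exact div_pos hx.1 (by positivity)
    · rw [div_lt_iff₀ (by positivity)]
      have h1 : x < 2 * b * u₀ := lt_of_lt_of_le hx.2 (min_le_left _ _)
      rw [hu₀def] at h1
      nlinarith
  -- sqrt identity
  have husqrt : ∀ x : ℝ, 0 < x →
      (Real.sqrt (x / (2 * b)))⁻¹ = Real.sqrt (2 * b) * (Real.sqrt x)⁻¹ := by
    intro x hx
    rw [Real.sqrt_div hx.le, inv_div, div_eq_mul_inv]
  -- rpow identity
  have hxpow : ∀ q : ℝ, ∀ x : ℝ, 0 < x →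
      x ^ (q - 3/2) = x ^ q * x⁻¹ * (Real.sqrt x)⁻¹ := by
    intro q x hx
    rw [show q - 3/2 = q + (-1) + (-(1/2)) by ring, Real.rpow_add hx, Real.rpow_add hx,
      Real.rpow_neg hx.le, Real.rpow_one, Real.rpow_neg hx.le, ← Real.sqrt_eq_rpow]
  -- nonnegativity of the integrand factor
  have hfactor : ∀ x : ℝ, 0 ≤ jaeger (x / (2 * b)) p + max p 0 :=
    fun x => add_nonneg (jaeger_nonneg _ _) (le_max_right _ _)
  have key : ∀ q : ℝ, 0 < q →
      (MeasureTheory.IntegrableOn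
          (fun x : ℝ => x ^ q * (Real.exp (-a * x / 2) / x
            * (jaeger (x / (2 * b)) p + max p 0))) (Set.Ioo 0 1)
        ↔ 1 / 2 < q) := by
    intro q hq
    set f : ℝ → ℝ := fun x : ℝ => x ^ q * (Real.exp (-a * x / 2) / x
        * (jaeger (x / (2 * b)) p + max p 0)) with hfdef
    have hf_nonneg : ∀ x ∈ Set.Ioo (0:ℝ) 1, 0 ≤ f x := by
      intro x hx
      have hx0 : (0:ℝ) < x := hx.1
      apply mul_nonneg (Real.rpow_nonneg hx0.le q)
      exact mul_nonneg (div_nonneg (Real.exp_nonneg _) hx0.le) (hfactor x)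
    -- upper bound near 0
    have hub : ∀ x ∈ Set.Ioo (0:ℝ) δ, f x ≤ (C * Real.sqrt (2*b)) * x ^ (q - 3/2) := by
      intro x hx
      have hx0 : (0:ℝ) < x := hx.1
      have hJ := (hbd _ (hmem x hx)).2.1
      have hexp : Real.exp (-a * x / 2) ≤ 1 := Real.exp_le_one_iff.2 (by nlinarith)
      have step : f x ≤ x ^ q * (x⁻¹ * (C * (Real.sqrt (x / (2*b)))⁻¹)) := by
        apply mul_le_mul_of_nonneg_left _ (Real.rpow_nonneg hx0.le q)
        apply mul_le_mul
        · rw [div_eq_mul_inv]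
          calc Real.exp (-a * x / 2) * x⁻¹ ≤ 1 * x⁻¹ :=
                mul_le_mul_of_nonneg_right hexp (by positivity)
          _ = x⁻¹ := one_mul _
        · exact hJ
        · exact hfactor x
        · positivity
      calc f x ≤ x ^ q * (x⁻¹ * (C * (Real.sqrt (x / (2*b)))⁻¹)) := step
      _ = (C * Real.sqrt (2*b)) * x ^ (q - 3/2) := by
          rw [husqrt x hx0, hxpow q x hx0]; ring
    -- lower bound near 0
    have hKpos : (0:ℝ) < Real.exp (-a/2) * (1 / (2 * Real.sqrt Real.pi)) * Real.sqrt (2*b) := by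
      have := Real.sqrt_pos.2 Real.pi_pos
      positivity
    set K : ℝ := Real.exp (-a/2) * (1 / (2 * Real.sqrt Real.pi)) * Real.sqrt (2*b) with hKdef
    have hlb : ∀ x ∈ Set.Ioo (0:ℝ) δ, K * x ^ (q - 3/2) ≤ f x := by
      intro x hx
      have hx0 : (0:ℝ) < x := hx.1
      have hx1 : x < 1 := lt_of_lt_of_le hx.2 hδ1
      have hJ := (hbd _ (hmem x hx)).1
      have hexp : Real.exp (-a/2) ≤ Real.exp (-a * x / 2) := by
        apply Real.exp_le_exp.2; nlinarith
      have step : x ^ q * (Real.exp (-a/2) * x⁻¹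
            * ((1 / (2 * Real.sqrt Real.pi)) * (Real.sqrt (x / (2*b)))⁻¹)) ≤ f x := by
        apply mul_le_mul_of_nonneg_left _ (Real.rpow_nonneg hx0.le q)
        apply mul_le_mul
        · rw [div_eq_mul_inv]
          exact mul_le_mul_of_nonneg_right hexp (by positivity)
        · exact hJ
        · have := Real.sqrt_pos.2 Real.pi_pos
          positivity
        · positivity
      calc K * x ^ (q - 3/2)
          = x ^ q * (Real.exp (-a/2) * x⁻¹
            * ((1 / (2 * Real.sqrt Real.pi)) * (Real.sqrt (x / (2*b)))⁻¹)) := by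
            rw [husqrt x hx0, hxpow q x hx0, hKdef]; ring
      _ ≤ f x := step
    constructor
    · -- integrable → q > 1/2
      intro hInt
      by_contra hq2
      push_neg at hq2
      have hsub : Set.Ioo (0:ℝ) δ ⊆ Set.Ioo (0:ℝ) 1 :=
        Set.Ioo_subset_Ioo le_rfl hδ1
      have hg : Integrable (fun x => K⁻¹ * f x) ((volume : Measure ℝ).restrict (Set.Ioo 0 δ)) :=
        (hInt.mono_set hsub).const_mul _
      have hrint : IntegrableOn (fun x : ℝ => x ^ (q - 3/2)) (Set.Ioo (0:ℝ) δ) := by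
        refine MeasureTheory.Integrable.mono hg
          ((by fun_prop : Measurable fun x : ℝ => x ^ (q - 3/2)).aestronglyMeasurable) ?_
        refine (ae_restrict_iff' measurableSet_Ioo).2 (Filter.Eventually.of_forall fun x hx => ?_)
        have hx0 : (0:ℝ) < x := hx.1
        have h1 : x ^ (q - 3/2) ≤ K⁻¹ * f x := (le_inv_mul_iff₀ hKpos).2 (hlb x hx)
        rw [Real.norm_eq_abs, Real.norm_eq_abs, abs_of_nonneg (Real.rpow_nonneg hx0.le _),
          abs_of_nonneg]
        · exact h1
        · exact le_trans (Real.rpow_nonneg hx0.le _) h1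
      have := (intervalIntegral.integrableOn_Ioo_rpow_iff hδpos).1 hrint
      linarith
    · -- q > 1/2 → integrable
      intro hq2
      have hi1 : IntegrableOn f (Set.Ioo 0 δ) := by
        refine MeasureTheory.Integrable.mono
          (((intervalIntegral.integrableOn_Ioo_rpow_iff hδpos).2 (by linarith : (-1:ℝ) < q - 3/2)).const_mul
            (C * Real.sqrt (2*b)))
          ((mf q).aestronglyMeasurable) ?_
        refine (ae_restrict_iff' measurableSet_Ioo).2 (Filter.Eventually.of_forall fun x hx => ?_)
        have hx0 : (0:ℝ) < x := hx.1
        rw [Real.norm_eq_abs, Real.norm_eq_abs,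
          abs_of_nonneg (hf_nonneg x ⟨hx0, lt_of_lt_of_le hx.2 hδ1⟩), abs_of_nonneg (by positivity)]
        exact hub x hx
      have hi2 : IntegrableOn f (Set.Ico δ 1) := by
        refine MeasureTheory.Integrable.mono'
          (g := fun _ : ℝ => 1/δ * (jaeger u₀ p + max p 0))
          (integrableOn_const measure_Ico_lt_top.ne)
          ((mf q).aestronglyMeasurable) ?_
        refine (ae_restrict_iff' measurableSet_Ico).2 (Filter.Eventually.of_forall fun x hx => ?_)
        have hx0 : (0:ℝ) < x := lt_of_lt_of_le hδpos hx.1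
        have hx1 : x < 1 := hx.2
        have hu₀le : u₀ ≤ x / (2 * b) := by
          rcases le_or_gt (2 * b * u₀) 1 with hcase | hcase
          · rw [le_div_iff₀ (by positivity)]
            have : δ = 2 * b * u₀ := min_eq_left hcase
            rw [this] at hx
            nlinarith [hx.1]
          · exfalso
            have : δ = 1 := min_eq_right hcase.le
            rw [this] at hx
            linarith [hx.1]
        obtain ⟨-, hJle⟩ := jaeger_mono hu₀le hint₀
        rw [Real.norm_eq_abs, abs_of_nonneg (hf_nonneg x ⟨hx0, hx1⟩)]
        calc f x ≤ 1 * (1/δ * (jaeger u₀ p + max p 0)) := by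
              apply mul_le_mul
              · exact Real.rpow_le_one hx0.le hx1.le hq.le
              · apply mul_le_mul
                · rw [div_eq_mul_inv, one_div]
                  calc Real.exp (-a * x / 2) * x⁻¹ ≤ 1 * x⁻¹ := by
                        apply mul_le_mul_of_nonneg_right
                          (Real.exp_le_one_iff.2 (by nlinarith)) (by positivity)
                  _ = x⁻¹ := one_mul _
                  _ ≤ δ⁻¹ := by
                        apply inv_anti₀ hδpos hx.1
                · exact add_le_add_left hJle _
                · exact hfactor x
                · positivity
              · exact mul_nonneg (div_nonneg (Real.exp_nonneg _) hx0.le) (hfactor x)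
              · exact zero_le_one
        _ = 1/δ * (jaeger u₀ p + max p 0) := one_mul _
      have hcover : Set.Ioo (0:ℝ) 1 ⊆ Set.Ioo 0 δ ∪ Set.Ico δ 1 := by
        intro x hx
        rcases lt_or_ge x δ with h | h
        · exact Or.inl ⟨hx.1, h⟩
        · exact Or.inr ⟨h, hx.2⟩
      exact (hi1.union hi2).mono_set hcover
  refine ⟨key, ?_⟩
  have hS : {q : ℝ | 0 < q ∧ MeasureTheory.IntegrableOn
      (fun x : ℝ => x ^ q * (Real.exp (-a * x / 2) / x
        * (jaeger (x / (2 * b)) p + max p 0))) (Set.Ioo 0 1)} = Set.Ioi (1/2 : ℝ) := by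
    ext q
    simp only [Set.mem_setOf_eq, Set.mem_Ioi]
    constructor
    · rintro ⟨hq, hInt⟩
      exact (key q hq).1 hInt
    · intro hq
      exact ⟨by linarith, (key q (by linarith)).2 hq⟩
  rw [hS]
  exact csInf_Ioi
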